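/- arXiv:2412.11013 — 2 statements merged into one kernel-verified Lean document; each statement's English description precedes it below -/
import Mathlib

section
/- In the Hopf algebra PSym_A, the antipode satisfies S(h_P) = Σ_{J ⪯ P} (-1)^{ℓ(J)} h_{sort(J)}, where the sum runs over all sentences J refining the p-sentence P. -/
open scoped TensorProduct

attribute [local instance] Classical.propDecidable

/-- Graded lexicographic order on words. -/
def gle {A : Type*} [LinearOrder A] (v w : List A) : Prop :=
  v.length < w.length ∨ (v.length = w.length ∧ (v = w ∨ List.Lex (· < ·) v w))

/-- Sort the words of a sentence into weakly decreasing graded lexicographic order. -/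
noncomputable def sortSent {A : Type*} [LinearOrder A] (I : List (List A)) :
    List (List A) :=
  I.mergeSort fun v w => decide (gle w v)

/-- `PSym_A`: the commutative polynomial algebra over ℚ on generators `h_w` indexed
by nonempty words `w` over `A`. -/
abbrev PSymA (A : Type*) := MvPolynomial {w : List A // w ≠ []} ℚ

/-- The generator `h_w` (with `h_∅ = 1`). -/
noncomputable def hgen {A : Type*} (w : List A) : PSymA A :=
  if h : w = [] then 1 else MvPolynomial.X ⟨w, h⟩

/-- The basis element `h_P = h_{w_1} ⋯ h_{w_k}` for a (p-)sentence `P`. -/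
noncomputable def hsent {A : Type*} (P : List (List A)) : PSymA A :=
  (P.map hgen).prod

/-- All refinements of a single word (as sentences with that maximal word). -/
def wordSplits {A : Type*} : List A → List (List (List A))
  | [] => [[]]
  | a :: l =>
      (wordSplits l).flatMap fun s =>
        [[a] :: s] ++
          (match s with
            | [] => []
            | w :: rest => [(a :: w) :: rest])

/-- All refinements of a sentence (refine each word and concatenate). -/
def refinements {A : Type*} (I : List (List A)) : List (List (List A)) :=
  I.foldr (fun w acc => (wordSplits w).flatMap fun s => acc.map (s ++ ·)) [[]]

/-- The comultiplication of `PSym_A`, as an algebra map determined on generators: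
`Δ(h_w) = Σ_{u·v = w} h_u ⊗ h_v` (deconcatenation, from right-containment). -/
noncomputable def Δh {A : Type*} : PSymA A →ₐ[ℚ] PSymA A ⊗[ℚ] PSymA A :=
  MvPolynomial.aeval fun w : {w : List A // w ≠ []} =>
    ∑ j ∈ Finset.range (w.1.length + 1), hgen (w.1.take j) ⊗ₜ[ℚ] hgen (w.1.drop j)

/-- The counit of `PSym_A`: `ε(h_P) = 1` if `P = ∅` and `0` otherwise. -/
noncomputable def εh {A : Type*} : PSymA A →ₐ[ℚ] ℚ :=
  MvPolynomial.aeval fun _ : {w : List A // w ≠ []} => (0 : ℚ)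

/-- The candidate antipode, determined on generators by
`S(h_w) = Σ_{J ⪯ (w)} (-1)^{ℓ(J)} h_{sort(J)}`. -/
noncomputable def Sh {A : Type*} [LinearOrder A] : PSymA A →ₐ[ℚ] PSymA A :=
  MvPolynomial.aeval fun w : {w : List A // w ≠ []} =>
    ((wordSplits w.1).map fun J => (-1 : PSymA A) ^ J.length * hsent (sortSent J)).sum

section Aux

variable {A : Type*}

lemma hgen_nil : hgen ([] : List A) = 1 := by simp [hgen]

lemma hsent_nil : hsent ([] : List (List A)) = 1 := by simp [hsent]

lemma hsent_cons (w : List A) (P : List (List A)) :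
    hsent (w :: P) = hgen w * hsent P := by simp [hsent]

lemma hsent_append (s t : List (List A)) : hsent (s ++ t) = hsent s * hsent t := by
  simp [hsent]

lemma hsent_perm {J K : List (List A)} (h : J.Perm K) : hsent J = hsent K :=
  List.Perm.prod_eq (h.map hgen)

lemma hsent_sortSent [LinearOrder A] (J : List (List A)) :
    hsent (sortSent J) = hsent J :=
  hsent_perm (List.mergeSort_perm J _)

/-- The signed sum over splits of a word. -/
noncomputable def Gp (w : List A) : PSymA A :=
  ((wordSplits w).map fun J => (-1 : PSymA A) ^ J.length * hsent J).sum

lemma Gp_nil : Gp ([] : List A) = 1 := by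
  simp [Gp, wordSplits, hsent]

lemma wordSplits_ne_nil {w : List A} (hw : w ≠ []) {s : List (List A)}
    (hs : s ∈ wordSplits w) : s ≠ [] := by
  cases w with
  | nil => exact absurd rfl hw
  | cons a l =>
    simp only [wordSplits, List.mem_flatMap] at hs
    obtain ⟨t, _, h2⟩ := hs
    cases t with
    | nil => simp at h2; subst h2; simp
    | cons u rest =>
      simp at h2
      rcases h2 with h2 | h2 <;> subst h2 <;> simp

lemma sum_map_flatMap {α β M : Type*} [AddCommMonoid M] (l : List α)
    (g : α → List β) (f : β → M) :
    ((l.flatMap g).map f).sum = (l.map fun a => ((g a).map f).sum).sum := by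
  induction l with
  | nil => simp
  | cons a l ih => simp [List.flatMap_cons, ih]

lemma sum_splits_head (v : List A) (hv : v ≠ []) : ∀ (p : List A),
    ((wordSplits v).map fun s =>
        (-1 : PSymA A) ^ s.length * hsent ((p ++ s.headI) :: s.tail)).sum
      = -∑ j ∈ Finset.range v.length, hgen (p ++ v.take (j + 1)) * Gp (v.drop (j + 1)) := by
  induction v with
  | nil => exact absurd rfl hv
  | cons a l ih =>
    intro p
    by_cases hl : l = []
    · subst hl
      simp [wordSplits, hsent, Gp]
    · have hW : wordSplits (a :: l) = (wordSplits l).flatMap fun s =>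
        [[a] :: s] ++ (match s with | [] => [] | w :: rest => [(a :: w) :: rest]) := rfl
      rw [hW, sum_map_flatMap]
      have step : ∀ s ∈ wordSplits l,
          ((([[a] :: s] ++ (match s with | [] => [] | w :: rest => [(a :: w) :: rest])).map
            fun s => (-1 : PSymA A) ^ s.length * hsent ((p ++ s.headI) :: s.tail)).sum)
          = -(hgen (p ++ [a]) * ((-1 : PSymA A) ^ s.length * hsent s))
            + (-1 : PSymA A) ^ s.length * hsent (((p ++ [a]) ++ s.headI) :: s.tail) := by
        intro s hs
        obtain ⟨u, rest, rfl⟩ := List.exists_cons_of_ne_nil (wordSplits_ne_nil hl hs)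
        simp [hsent_cons, pow_succ]
        ring
      rw [List.map_congr_left step]
      rw [List.sum_map_add]
      have e1 : (List.map (fun s => -(hgen (p ++ [a]) * ((-1 : PSymA A) ^ s.length * hsent s)))
          (wordSplits l)).sum = -(hgen (p ++ [a]) * Gp l) := by
        have hfun : ∀ s : List (List A),
            -(hgen (p ++ [a]) * ((-1 : PSymA A) ^ s.length * hsent s))
              = (-(hgen (p ++ [a]))) * ((-1 : PSymA A) ^ s.length * hsent s) := fun s => by ring
        simp only [hfun]
        rw [List.sum_map_mul_left, neg_mul]
        rfl
      rw [e1, ih hl (p ++ [a])]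
      rw [List.length_cons, Finset.sum_range_succ']
      simp only [List.take_succ_cons, List.drop_succ_cons, List.take_zero, List.drop_zero]
      have e2 : ∀ j : ℕ, p ++ [a] ++ l.take (j + 1) = p ++ a :: l.take (j + 1) := by
        intro j; simp
      simp only [e2]
      abel

lemma Gp_eq (v : List A) (hv : v ≠ []) :
    Gp v = -∑ j ∈ Finset.range v.length, hgen (v.take (j + 1)) * Gp (v.drop (j + 1)) := by
  have h := sum_splits_head v hv []
  simp only [List.nil_append] at h
  rw [← h, Gp]
  congr 1
  apply List.map_congr_left
  intro s hs
  obtain ⟨u, rest, rfl⟩ := List.exists_cons_of_ne_nil (wordSplits_ne_nil hv hs)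
  simp

lemma key : ∀ (n : ℕ) (w : List A), w.length ≤ n →
    ∑ j ∈ Finset.range (w.length + 1), Gp (w.take j) * hgen (w.drop j)
      = if w = [] then 1 else 0 := by
  intro n
  induction n with
  | zero =>
    intro w hw
    have hw' : w = [] := List.length_eq_zero_iff.mp (Nat.le_zero.mp hw)
    subst hw'; simp [Gp_nil, hgen_nil]
  | succ m ih =>
    intro w hw
    by_cases hw0 : w = []
    · subst hw0; simp [Gp_nil, hgen_nil]
    · set N := w.length with hN
      have hN1 : 1 ≤ N := by
        rcases w with _ | ⟨a, l⟩
        · exact absurd rfl hw0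
        · simp [hN]
      rw [if_neg hw0, Finset.sum_range_succ']
      simp only [List.take_zero, List.drop_zero, Gp_nil, one_mul]
      have main : ∀ i ∈ Finset.range N,
          Gp (w.take (i + 1)) * hgen (w.drop (i + 1))
            = -∑ k ∈ Finset.range (i + 1), hgen (w.take (k + 1)) *
                (Gp ((w.drop (k + 1)).take (i - k)) * hgen ((w.drop (k + 1)).drop (i - k))) := by
        intro i hi
        rw [Finset.mem_range] at hi
        have htk : w.take (i + 1) ≠ [] := by
          simp only [ne_eq, List.take_eq_nil_iff]; push_neg; exact ⟨by omega, hw0⟩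
        rw [Gp_eq _ htk]
        have hlen : (w.take (i + 1)).length = i + 1 := by
          rw [List.length_take]; omega
        rw [hlen, neg_mul, Finset.sum_mul]
        congr 1
        apply Finset.sum_congr rfl
        intro k hk
        rw [Finset.mem_range] at hk
        have e1 : (w.take (i + 1)).take (k + 1) = w.take (k + 1) := by
          rw [List.take_take, min_eq_left (by omega)]
        have e2 : (w.take (i + 1)).drop (k + 1) = (w.drop (k + 1)).take (i - k) := by
          rw [List.drop_take]; congr 1; omega
        have e3 : w.drop (i + 1) = (w.drop (k + 1)).drop (i - k) := by
          rw [List.drop_drop]; congr 1; omega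
        rw [e1, e2, e3]; ring
      rw [Finset.sum_congr rfl main, Finset.sum_neg_distrib]
      have swap : ∑ i ∈ Finset.range N, ∑ k ∈ Finset.range (i + 1),
            hgen (w.take (k + 1)) *
              (Gp ((w.drop (k + 1)).take (i - k)) * hgen ((w.drop (k + 1)).drop (i - k)))
          = ∑ k ∈ Finset.range N, ∑ i ∈ Finset.Ico k N,
            hgen (w.take (k + 1)) *
              (Gp ((w.drop (k + 1)).take (i - k)) * hgen ((w.drop (k + 1)).drop (i - k))) := by
        apply Finset.sum_comm'
        intro i k
        simp only [Finset.mem_range, Finset.mem_Ico]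
        omega
      rw [swap]
      have inner : ∀ k ∈ Finset.range N,
          ∑ i ∈ Finset.Ico k N,
            hgen (w.take (k + 1)) *
              (Gp ((w.drop (k + 1)).take (i - k)) * hgen ((w.drop (k + 1)).drop (i - k)))
          = if k = N - 1 then hgen (w.take (k + 1)) else 0 := by
        intro k hk
        rw [Finset.mem_range] at hk
        rw [← Finset.mul_sum, Finset.sum_Ico_eq_sum_range]
        have hv : (w.drop (k + 1)).length = N - (k + 1) := by
          rw [List.length_drop]
        have hrange : N - k = (w.drop (k + 1)).length + 1 := by omega
        have e4 : ∀ t : ℕ, k + t - k = t := fun t => by omega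
        simp only [e4]
        rw [hrange, ih (w.drop (k + 1)) (by omega)]
        by_cases hke : k = N - 1
        · have : w.drop (k + 1) = [] := by
            rw [← List.length_eq_zero_iff, hv]; omega
          rw [if_pos this, if_pos hke, mul_one]
        · have : w.drop (k + 1) ≠ [] := by
            intro hnil
            have hl := congrArg List.length hnil
            rw [hv] at hl
            simp at hl
            omega
          rw [if_neg this, if_neg hke, mul_zero]
      rw [Finset.sum_congr rfl inner, Finset.sum_ite_eq' (Finset.range N) (N - 1)]
      rw [if_pos (Finset.mem_range.mpr (by omega))]
      have : w.take (N - 1 + 1) = w := by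
        have : N - 1 + 1 = N := by omega
        rw [this, hN, List.take_length]
      rw [this]
      abel

lemma Sh_hgen [LinearOrder A] (w : List A) : Sh (hgen w) = Gp w := by
  by_cases h : w = []
  · subst h; rw [hgen_nil, map_one, Gp_nil]
  · rw [hgen, dif_neg h, Sh, MvPolynomial.aeval_X, Gp]
    congr 1
    apply List.map_congr_left
    intro s _
    rw [hsent_sortSent]

lemma εh_hgen (w : List A) : εh (hgen w) = if w = [] then 1 else 0 := by
  by_cases h : w = []
  · subst h; rw [hgen_nil, map_one, if_pos rfl]
  · rw [hgen, dif_neg h, εh, MvPolynomial.aeval_X, if_neg h]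

/-- The convolution of `Sh` with the identity, as an algebra map. -/
noncomputable def convA [LinearOrder A] : PSymA A →ₐ[ℚ] PSymA A :=
  (Algebra.TensorProduct.lmul' ℚ).comp
    ((Algebra.TensorProduct.map Sh (AlgHom.id ℚ (PSymA A))).comp Δh)

lemma conv_eq [LinearOrder A] (x : PSymA A) :
    (LinearMap.mul' ℚ (PSymA A))
        ((TensorProduct.map (Sh (A := A)).toLinearMap LinearMap.id) (Δh x))
      = convA x := by
  have hmaps : (LinearMap.mul' ℚ (PSymA A)).comp
        (TensorProduct.map (Sh (A := A)).toLinearMap LinearMap.id)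
      = (Algebra.TensorProduct.lmul' ℚ (S := PSymA A)).toLinearMap.comp
        (Algebra.TensorProduct.map Sh (AlgHom.id ℚ (PSymA A))).toLinearMap := by
    apply TensorProduct.ext'
    intro a b
    simp only [LinearMap.comp_apply, TensorProduct.map_tmul, LinearMap.mul'_apply,
      AlgHom.toLinearMap_apply, Algebra.TensorProduct.map_tmul,
      Algebra.TensorProduct.lmul'_apply_tmul, LinearMap.id_coe, id_eq, AlgHom.coe_id]
  have := LinearMap.congr_fun hmaps (Δh x)
  simp only [LinearMap.comp_apply] at this
  rw [this, convA]
  simp only [AlgHom.coe_comp, Function.comp_apply, AlgHom.toLinearMap_apply]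

lemma convA_hgen [LinearOrder A] (w : List A) :
    convA (hgen w) = if w = [] then 1 else 0 := by
  by_cases h : w = []
  · subst h; rw [hgen_nil, map_one, if_pos rfl]
  · rw [hgen, dif_neg h, if_neg h, convA]
    simp only [AlgHom.coe_comp, Function.comp_apply]
    rw [Δh, MvPolynomial.aeval_X, map_sum, map_sum]
    simp only [Algebra.TensorProduct.map_tmul, AlgHom.coe_id, id_eq,
      Algebra.TensorProduct.lmul'_apply_tmul, Sh_hgen]
    exact (key w.length w le_rfl).trans (if_neg h)

lemma refinements_sum (P : List (List A)) :
    ((refinements P).map fun J => (-1 : PSymA A) ^ J.length * hsent J).sum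
      = (P.map fun w => Gp w).prod := by
  induction P with
  | nil => simp [refinements, hsent]
  | cons w P ih =>
    have hR : refinements (w :: P)
        = (wordSplits w).flatMap fun s => (refinements P).map (s ++ ·) := rfl
    rw [hR, sum_map_flatMap]
    have step : ∀ s ∈ wordSplits w,
        ((((refinements P).map (s ++ ·)).map
            fun J => (-1 : PSymA A) ^ J.length * hsent J).sum)
          = ((-1 : PSymA A) ^ s.length * hsent s) *
              ((refinements P).map fun J => (-1 : PSymA A) ^ J.length * hsent J).sum := by
      intro s _
      rw [List.map_map, ← List.sum_map_mul_left]
      congr 1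
      apply List.map_congr_left
      intro J _
      simp only [Function.comp_apply, List.length_append, hsent_append, pow_add]
      ring
    rw [List.map_congr_left step]
    have : (List.map (fun s => ((-1 : PSymA A) ^ s.length * hsent s) *
        ((refinements P).map fun J => (-1 : PSymA A) ^ J.length * hsent J).sum)
        (wordSplits w)).sum
        = Gp w * ((refinements P).map fun J => (-1 : PSymA A) ^ J.length * hsent J).sum := by
      rw [Gp, ← List.sum_map_mul_right]
    rw [this, ih, List.map_cons, List.prod_cons]

end Aux

/-- In the Hopf algebra `PSym_A`, the antipode satisfies
`S(h_P) = Σ_{J ⪯ P} (-1)^{ℓ(J)} h_{sort(J)}`, the sum running over all sentences `J`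
refining the p-sentence `P`: the map `Sh` given by this formula satisfies the antipode
(convolution inverse) property with respect to `Δ` and `ε` on each basis element `h_P`,
and on `h_P` it is given by exactly this sum over refinements. -/
theorem stmt10 {A : Type*} [LinearOrder A] (P : List (List A))
    (hw : ∀ w ∈ P, w ≠ []) (hsorted : P.Pairwise fun v w => gle w v) :
    Sh (hsent P) =
      ((refinements P).map fun J => (-1 : PSymA A) ^ J.length * hsent (sortSent J)).sum ∧
    (LinearMap.mul' ℚ (PSymA A))
        ((TensorProduct.map (Sh (A := A)).toLinearMap LinearMap.id) (Δh (hsent P))) =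
      algebraMap ℚ (PSymA A) (εh (hsent P)) := by
  constructor
  · have e : ((refinements P).map fun J =>
        (-1 : PSymA A) ^ J.length * hsent (sortSent J)).sum
        = ((refinements P).map fun J => (-1 : PSymA A) ^ J.length * hsent J).sum := by
      congr 1
      exact List.map_congr_left fun J _ => by rw [hsent_sortSent]
    rw [e, refinements_sum, hsent, map_list_prod, List.map_map]
    congr 1
    exact List.map_congr_left fun w _ => by simp only [Function.comp_apply, Sh_hgen]
  · rw [conv_eq]
    cases P with
    | nil => simp [hsent_nil]
    | cons w Q =>
      have hw0 : w ≠ [] := hw w (List.mem_cons_self (a := w) (l := Q))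
      simp only [hsent_cons, map_mul, convA_hgen, εh_hgen, if_neg hw0, zero_mul, map_zero]
end

section
/- For any p-sentence P, the colored monomial symmetric functions satisfy: the comultiplication inherited from QSym_A restricts, giving Δ(m_P) = Σ_{Q ⊑ P} m_Q ⊗ m_{P ⧵⧵ Q}, where the sum runs over submultisets Q of the multiset of words of P, and P ⧵⧵ Q is the p-sentence on the complementary multiset. -/
open scoped TensorProduct

attribute [local instance] Classical.propDecidable

/-- `QSym_A` modeled as the free ℚ-module with basis `M_I` indexed by sentences. -/
abbrev QSymA (A : Type*) := (List (List A)) →₀ ℚ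

/-- The comultiplication of `QSym_A` on the monomial basis:
`Δ(M_I) = Σ_{J·K = I} M_J ⊗ M_K`. -/
noncomputable def Δm (A : Type*) : QSymA A →ₗ[ℚ] QSymA A ⊗[ℚ] QSymA A :=
  Finsupp.lift (QSymA A ⊗[ℚ] QSymA A) ℚ (List (List A)) fun I =>
    ∑ j ∈ Finset.range (I.length + 1),
      Finsupp.single (I.take j) (1 : ℚ) ⊗ₜ[ℚ] Finsupp.single (I.drop j) (1 : ℚ)

/-- The colored monomial symmetric function `m_P = Σ_{sort(I) = P} M_I`, the sum
over the distinct rearrangements `I` of the words of `P`. -/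
noncomputable def mcol {A : Type*} (P : List (List A)) : QSymA A :=
  ∑ I ∈ P.permutations.toFinset, Finsupp.single I (1 : ℚ)

section GleAux

variable {A : Type*} [LinearOrder A]

theorem gle_total (v w : List A) : gle v w ∨ gle w v := by
  rcases lt_trichotomy v.length w.length with h | h | h
  · exact Or.inl (Or.inl h)
  · haveI inst : IsTrichotomous (List A) (List.Lex (· < ·)) := inferInstance
    rcases (show List.Lex (· < ·) v w ∨ v = w ∨ List.Lex (· < ·) w v from
      if h1 : List.Lex (· < ·) v w then Or.inl h1 else if h2 : List.Lex (· < ·) w v then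
        Or.inr (Or.inr h2) else Or.inr (Or.inl (inst.trichotomous v w h1 h2))) with h' | h' | h'
    · exact Or.inl (Or.inr ⟨h, Or.inr h'⟩)
    · exact Or.inl (Or.inr ⟨h, Or.inl h'⟩)
    · exact Or.inr (Or.inr ⟨h.symm, Or.inr h'⟩)
  · exact Or.inr (Or.inl h)

theorem gle_trans {u v w : List A} (h1 : gle u v) (h2 : gle v w) : gle u w := by
  rcases h1 with h1 | ⟨e1, h1⟩
  · rcases h2 with h2 | ⟨e2, h2⟩
    · exact Or.inl (h1.trans h2)
    · exact Or.inl (e2 ▸ h1)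
  · rcases h2 with h2 | ⟨e2, h2⟩
    · exact Or.inl (e1 ▸ h2)
    · refine Or.inr ⟨e1.trans e2, ?_⟩
      rcases h1 with rfl | h1
      · exact h2
      · rcases h2 with rfl | h2
        · exact Or.inr h1
        · exact Or.inr (List.lex_trans lt_trans h1 h2)

theorem gle_antisymm {v w : List A} (h1 : gle v w) (h2 : gle w v) : v = w := by
  rcases h1 with h1 | ⟨e1, h1⟩
  · rcases h2 with h2 | ⟨e2, _⟩ <;> omega
  · rcases h2 with h2 | ⟨e2, h2⟩
    · omega
    · rcases h1 with rfl | h1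
      · rfl
      · rcases h2 with rfl | h2
        · rfl
        · exact absurd h2 (asymm h1)

end GleAux

/-- `Δ(m_P) = Σ_{Q ⊑ P} m_Q ⊗ m_{P ⧵⧵ Q}`, the sum over distinct submultisets `Q` of
the multiset of words of `P` (realized as the distinct sublists of the sorted list `P`,
with `P.diff s` the complementary multiset). -/
theorem stmt15 {A : Type*} [LinearOrder A] (P : List (List A))
    (hw : ∀ w ∈ P, w ≠ []) (hsorted : P.Pairwise fun v w => gle w v) :
    Δm A (mcol P) = ∑ s ∈ P.sublists.toFinset, mcol s ⊗ₜ[ℚ] mcol (P.diff s) := by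
  classical
  set rr : List A → List A → Prop := fun v w => gle w v with hrr
  haveI : IsTotal (List A) rr := ⟨fun a b => gle_total b a⟩
  haveI : IsTrans (List A) rr := ⟨fun a b c h1 h2 => gle_trans h2 h1⟩
  haveI : IsAntisymm (List A) rr := ⟨fun a b h1 h2 => gle_antisymm h2 h1⟩
  have hPs : P.Pairwise rr := hsorted
  -- notation for sorting a list of words
  set srt : List (List A) → List (List A) := fun l => l.insertionSort rr with hsrt
  have hsrt_perm : ∀ l : List (List A), List.Perm (srt l) l := fun l => List.perm_insertionSort rr l
  have hsrt_sorted : ∀ l : List (List A), (srt l).Pairwise rr :=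
    fun l => List.pairwise_insertionSort rr l
  -- compute Δm on basis elements
  have hΔ : ∀ I : List (List A), Δm A (Finsupp.single I (1 : ℚ)) =
      ∑ j ∈ Finset.range (I.length + 1),
        Finsupp.single (I.take j) (1 : ℚ) ⊗ₜ[ℚ] Finsupp.single (I.drop j) (1 : ℚ) := by
    intro I
    rw [Δm, Finsupp.lift_apply, Finsupp.sum_single_index] <;> simp
  rw [mcol, map_sum]
  simp_rw [hΔ, mcol, TensorProduct.sum_tmul, TensorProduct.tmul_sum]
  rw [Finset.sum_sigma']
  simp_rw [← Finset.sum_product']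
  rw [Finset.sum_sigma']
  refine Finset.sum_bij'
    (fun a _ => (⟨srt (a.1.take a.2), (a.1.take a.2, a.1.drop a.2)⟩ :
      Σ _ : List (List A), List (List A) × List (List A)))
    (fun b _ => (⟨b.2.1 ++ b.2.2, b.2.1.length⟩ : Σ _ : List (List A), ℕ))
    ?_ ?_ ?_ ?_ ?_
  · -- forward membership
    rintro ⟨I, j⟩ ha
    simp only [Finset.mem_sigma, List.mem_toFinset, List.mem_permutations,
      Finset.mem_range, List.mem_sublists, Finset.mem_product] at ha ⊢
    obtain ⟨hIP, hj⟩ := ha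
    have htake : List.Subperm (I.take j) P := ((I.take_sublist j).subperm).trans hIP.subperm
    have hsub : List.Sublist (srt (I.take j)) P :=
      List.sublist_of_subperm_of_pairwise
        (((hsrt_perm _).subperm).trans htake) (hsrt_sorted _) hPs
    refine ⟨hsub, (hsrt_perm _).symm, ?_⟩
    -- I.drop j ~ P.diff (srt (I.take j))
    have hsp : List.Subperm (srt (I.take j)) P := hsub.subperm
    have h2 : List.Perm (srt (I.take j) ++ I.drop j) P := by
      refine List.Perm.trans (List.Perm.append (hsrt_perm _) (List.Perm.refl _)) ?_
      rw [List.take_append_drop]; exact hIP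
    refine (List.perm_append_left_iff _).1 (h2.trans ?_)
    have key := (List.subperm_append_diff_self_of_count_le
      (fun x _ => hsp.count_le x)).symm
    convert key using 5
  · -- backward membership
    rintro ⟨s, J, K⟩ hb
    simp only [Finset.mem_sigma, List.mem_toFinset, List.mem_permutations,
      Finset.mem_range, List.mem_sublists, Finset.mem_product] at hb ⊢
    obtain ⟨hsP, hJ, hK⟩ := hb
    constructor
    · refine (List.Perm.append hJ hK).trans ?_
      have key := List.subperm_append_diff_self_of_count_le
        (l₁ := s) (l₂ := P) (fun x _ => hsP.subperm.count_le x)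
      convert key using 5
    · simp only [List.length_append]
      omega
  · -- left inverse
    rintro ⟨I, j⟩ ha
    simp only [Finset.mem_sigma, List.mem_toFinset, List.mem_permutations,
      Finset.mem_range] at ha
    have hj : j ≤ I.length := by omega
    simp [List.take_append_drop, List.length_take, Nat.min_eq_left hj]
  · -- right inverse
    rintro ⟨s, J, K⟩ hb
    simp only [Finset.mem_sigma, List.mem_toFinset, List.mem_permutations,
      Finset.mem_range, List.mem_sublists, Finset.mem_product] at hb
    obtain ⟨hsP, hJ, hK⟩ := hb
    have ht : (J ++ K).take J.length = J := List.take_left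
    have hd : (J ++ K).drop J.length = K := List.drop_left
    have hs : srt J = s := by
      refine List.Perm.eq_of_pairwise' (hsrt_sorted J) ?_ ((hsrt_perm J).trans hJ)
      exact hPs.sublist hsP
    simp [ht, hd, hs]
  · -- values agree
    rintro ⟨I, j⟩ _
    rfl
end
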